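/- Let P be a well-moded program and Ā a well-moded query, and let ξ be an LD-derivation of Ā in P. Then every atom selected in ξ contains ground terms in all of its input positions. -/

import Mathlib

/-- First-order terms over function symbols `F` and variables `V`. -/
inductive Term (F V : Type) : Type where
  | var : V → Term F V
  | fn  : F → List (Term F V) → Term F V

namespace Term

/-- `VarIn v t` holds iff the variable `v` occurs in the term `t`. -/
inductive VarIn {F V : Type} : V → Term F V → Prop where
  | var (v : V) : VarIn v (.var v)
  | fn {v : V} (f : F) {args : List (Term F V)} {t : Term F V} :
      t ∈ args → VarIn v t → VarIn v (.fn f args)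

/-- Application of a substitution (a map from variables to terms) to a term. -/
def subst {F V : Type} (σ : V → Term F V) : Term F V → Term F V
  | .var v => σ v
  | .fn f args => .fn f (args.attach.map fun t => subst σ t.1)
termination_by t => sizeOf t
decreasing_by
  have := List.sizeOf_lt_of_mem t.2
  simp only [Term.fn.sizeOf_spec]
  omega

end Term

/-- The set of variables occurring in a list (tuple) of terms. -/
def varsOf {F V : Type} (ts : List (Term F V)) : Set V :=
  {v | ∃ t ∈ ts, Term.VarIn v t}

/-- An atom `p(s̄, t̄)`: a relation symbol together with the tuple of terms
filling its input positions and the tuple filling its output positions. -/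
structure Atom (P F V : Type) where
  pred : P
  inputs : List (Term F V)
  outputs : List (Term F V)

/-- Application of a substitution to an atom. -/
def Atom.subst {P F V : Type} (σ : V → Term F V) (A : Atom P F V) : Atom P F V :=
  ⟨A.pred, A.inputs.map (Term.subst σ), A.outputs.map (Term.subst σ)⟩

/-- The set of variables occurring in an atom. -/
def Atom.vars {P F V : Type} (A : Atom P F V) : Set V :=
  varsOf A.inputs ∪ varsOf A.outputs

/-- The set of variables occurring in a query (a list of atoms). -/
def queryVars {P F V : Type} (Q : List (Atom P F V)) : Set V :=
  {v | ∃ a ∈ Q, v ∈ a.vars}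

/-- A query `p_1(s̄_1,t̄_1), …, p_n(s̄_n,t̄_n)` is well-moded iff for every `i`,
`Var(s̄_i) ⊆ ⋃_{j=1}^{i-1} Var(t̄_j)`. -/
def WellModedQuery {P F V : Type} (Q : List (Atom P F V)) : Prop :=
  ∀ i (h : i < Q.length),
    varsOf (Q.get ⟨i, h⟩).inputs ⊆ varsOf (((Q.take i).map Atom.outputs).flatten)

/-- A clause `p_0(t̄_0, s̄_{n+1}) ← p_1(s̄_1,t̄_1), …, p_n(s̄_n,t̄_n)` (with head
input tuple `t̄_0 = head.inputs` and head output tuple `s̄_{n+1} = head.outputs`)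
is well-moded iff for every `i ∈ [1, n+1]`, `Var(s̄_i) ⊆ ⋃_{j=0}^{i-1} Var(t̄_j)`. -/
def WellModedClause {P F V : Type} (head : Atom P F V) (body : List (Atom P F V)) : Prop :=
  (∀ i (h : i < body.length),
    varsOf (body.get ⟨i, h⟩).inputs ⊆
      varsOf (head.inputs ++ ((body.take i).map Atom.outputs).flatten)) ∧
  varsOf head.outputs ⊆ varsOf (head.inputs ++ (body.map Atom.outputs).flatten)

/-- Composition of substitutions: first apply `θ`, then `τ`. -/
def Subst.comp {F V : Type} (θ τ : V → Term F V) : V → Term F V :=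
  fun v => (θ v).subst τ

/-- `θ` is a unifier of the atoms `A` and `H` iff `Aθ = Hθ`. -/
def IsUnifier {P F V : Type} (θ : V → Term F V) (A H : Atom P F V) : Prop :=
  A.subst θ = H.subst θ

/-- `θ` is a most general unifier of `A` and `H` iff it is a unifier and every
unifier of `A` and `H` factors through it. -/
def IsMGU {P F V : Type} (θ : V → Term F V) (A H : Atom P F V) : Prop :=
  IsUnifier θ A H ∧ ∀ σ : V → Term F V, IsUnifier σ A H → ∃ τ : V → Term F V,
    ∀ v, σ v = (θ v).subst τ

/-- A definite clause `head ← body`. -/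
structure Clause (P F V : Type) where
  head : Atom P F V
  body : List (Atom P F V)

/-- Application of a substitution to a clause. -/
def Clause.subst {P F V : Type} (σ : V → Term F V) (c : Clause P F V) : Clause P F V :=
  ⟨c.head.subst σ, c.body.map (Atom.subst σ)⟩

/-- The set of variables occurring in a clause. -/
def Clause.vars {P F V : Type} (c : Clause P F V) : Set V :=
  c.head.vars ∪ queryVars c.body

/-- One step of LD-resolution in the program `Prog`: the leftmost atom `A` of the
current query is the selected atom, and the next query is `(B̄ ++ rest)θ` where
`H ← B̄` is a variant (obtained via a renaming `ρ`) of a clause of `Prog` that is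
variable-disjoint with the current query and `θ` is a most general unifier of
`A` and `H`. -/
def LDStep {P F V : Type} (Prog : Set (Clause P F V))
    (Q Q' : List (Atom P F V)) : Prop :=
  ∃ (A : Atom P F V) (rest : List (Atom P F V)) (c : Clause P F V)
    (ρ : V → V) (θ : V → Term F V),
    Q = A :: rest ∧ c ∈ Prog ∧ Function.Injective ρ ∧
    Disjoint (queryVars Q) (Clause.vars (c.subst (fun v => Term.var (ρ v)))) ∧
    IsMGU θ A (c.subst (fun v => Term.var (ρ v))).head ∧
    Q' = ((c.subst (fun v => Term.var (ρ v))).body ++ rest).map (Atom.subst θ)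



section AuxProof

variable {P F V : Type}

theorem Term.subst_fn (σ : V → Term F V) (f : F) (args : List (Term F V)) :
    Term.subst σ (.fn f args) = .fn f (args.map (Term.subst σ)) := by
  rw [Term.subst]
  congr 1
  simp [List.map_attach_eq_pmap, List.pmap_eq_map]

theorem varIn_subst_of (σ : V → Term F V) (v : V) :
    ∀ t : Term F V, Term.VarIn v (t.subst σ) → ∃ w, Term.VarIn w t ∧ Term.VarIn v (σ w)
  | .var w, h => ⟨w, .var w, by simpa [Term.subst] using h⟩
  | .fn f args, h => by
      rw [Term.subst_fn] at h
      cases h with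
      | fn _ hmem hv =>
        obtain ⟨s, hs, rfl⟩ := List.mem_map.1 hmem
        obtain ⟨w, hw, hv'⟩ := varIn_subst_of σ v s hv
        exact ⟨w, .fn f hs hw, hv'⟩
termination_by t => sizeOf t
decreasing_by
  have := List.sizeOf_lt_of_mem hs
  simp only [Term.fn.sizeOf_spec]
  omega

theorem varIn_subst_from (σ : V → Term F V) {v w : V} {t : Term F V}
    (hw : Term.VarIn w t) (hv : Term.VarIn v (σ w)) : Term.VarIn v (t.subst σ) := by
  induction hw with
  | var => simpa [Term.subst] using hv
  | fn f hmem _ ih =>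
      rw [Term.subst_fn]
      exact .fn f (List.mem_map_of_mem hmem) ih

theorem varsOf_map_subst (σ : V → Term F V) (ts : List (Term F V)) :
    varsOf (ts.map (Term.subst σ)) = {v | ∃ w ∈ varsOf ts, Term.VarIn v (σ w)} := by
  ext v
  constructor
  · rintro ⟨t', ht', hv⟩
    obtain ⟨t, ht, rfl⟩ := List.mem_map.1 ht'
    obtain ⟨w, hw, hv'⟩ := varIn_subst_of σ v t hv
    exact ⟨w, ⟨t, ht, hw⟩, hv'⟩
  · rintro ⟨w, ⟨t, ht, hw⟩, hv⟩
    exact ⟨t.subst σ, List.mem_map_of_mem ht, varIn_subst_from σ hw hv⟩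

theorem varsOf_map_mono {ts us : List (Term F V)} (h : varsOf ts ⊆ varsOf us)
    (σ : V → Term F V) :
    varsOf (ts.map (Term.subst σ)) ⊆ varsOf (us.map (Term.subst σ)) := by
  rw [varsOf_map_subst, varsOf_map_subst]
  rintro v ⟨w, hw, hv⟩
  exact ⟨w, h hw, hv⟩

theorem varsOf_append (ts us : List (Term F V)) :
    varsOf (ts ++ us) = varsOf ts ∪ varsOf us := by
  ext v
  constructor
  · rintro ⟨t, ht, hv⟩
    rcases List.mem_append.1 ht with h | h
    · exact Or.inl ⟨t, h, hv⟩
    · exact Or.inr ⟨t, h, hv⟩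
  · rintro (⟨t, ht, hv⟩ | ⟨t, ht, hv⟩)
    · exact ⟨t, List.mem_append.2 (Or.inl ht), hv⟩
    · exact ⟨t, List.mem_append.2 (Or.inr ht), hv⟩

theorem varsOf_nil : varsOf ([] : List (Term F V)) = ∅ := by
  ext v
  simp [varsOf]

theorem outputs_flatten (σ : V → Term F V) (L : List (Atom P F V)) :
    ((L.map (Atom.subst σ)).map Atom.outputs).flatten
      = ((L.map Atom.outputs).flatten).map (Term.subst σ) := by
  rw [List.map_flatten]
  congr 1
  simp only [List.map_map]
  rfl

theorem wmClause_subst {head : Atom P F V} {body : List (Atom P F V)}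
    (h : WellModedClause head body) (σ : V → Term F V) :
    WellModedClause (head.subst σ) (body.map (Atom.subst σ)) := by
  obtain ⟨h1, h2⟩ := h
  constructor
  · intro i hi
    have hi' : i < body.length := by simpa using hi
    have key := varsOf_map_mono (h1 i hi') σ
    have hget : ((body.map (Atom.subst σ)).get ⟨i, hi⟩).inputs
        = (body.get ⟨i, hi'⟩).inputs.map (Term.subst σ) := by
      simp only [List.get_eq_getElem, List.getElem_map]
      rfl
    have hrhs : (head.subst σ).inputs
          ++ (((body.map (Atom.subst σ)).take i).map Atom.outputs).flatten
        = (head.inputs ++ ((body.take i).map Atom.outputs).flatten).map (Term.subst σ) := by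
      rw [← List.map_take, outputs_flatten, List.map_append]
      rfl
    rw [hget, hrhs]
    simpa [List.map_append] using key
  · have key := varsOf_map_mono h2 σ
    have hrhs : (head.subst σ).inputs
          ++ ((body.map (Atom.subst σ)).map Atom.outputs).flatten
        = (head.inputs ++ (body.map Atom.outputs).flatten).map (Term.subst σ) := by
      rw [outputs_flatten, List.map_append]
      rfl
    show varsOf (head.outputs.map (Term.subst σ)) ⊆ _
    rw [hrhs]
    simpa [List.map_append] using key

theorem wm_first_ground {A : Atom P F V} {rest : List (Atom P F V)}
    (hQ : WellModedQuery (A :: rest)) : varsOf A.inputs ⊆ (∅ : Set V) := by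
  have h := hQ 0 (by simp)
  simpa [varsOf_nil] using h

/-- The key lemma: an LD-resolvent of a well-moded query with a well-moded
clause is well-moded. -/
theorem resolvent_wm {A : Atom P F V} {rest : List (Atom P F V)}
    {H : Atom P F V} {B : List (Atom P F V)} {θ : V → Term F V}
    (hQ : WellModedQuery (A :: rest))
    (hcl : WellModedClause H B)
    (hHin : varsOf (H.inputs.map (Term.subst θ)) ⊆ (∅ : Set V))
    (hout : A.outputs.map (Term.subst θ) = H.outputs.map (Term.subst θ)) :
    WellModedQuery ((B ++ rest).map (Atom.subst θ)) := by
  obtain ⟨hb, hh⟩ := hcl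
  rw [List.map_append]
  intro i hi
  have hlen : ((B.map (Atom.subst θ)) ++ (rest.map (Atom.subst θ))).length
      = B.length + rest.length := by simp
  by_cases hcase : i < B.length
  · -- the atom comes from the clause body
    have hget : ((B.map (Atom.subst θ)) ++ (rest.map (Atom.subst θ))).get ⟨i, hi⟩
        = (B.get ⟨i, hcase⟩).subst θ := by
      simp only [List.get_eq_getElem]
      rw [List.getElem_append_left (by simpa using hcase)]
      simp
    have htake : ((B.map (Atom.subst θ)) ++ (rest.map (Atom.subst θ))).take i
        = (B.take i).map (Atom.subst θ) := by
      rw [List.take_append_of_le_length (by simpa using hcase.le), List.map_take]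
    rw [hget, htake]
    have key := varsOf_map_mono (hb i hcase) θ
    rw [List.map_append, varsOf_append] at key
    have : varsOf ((B.get ⟨i, hcase⟩).inputs.map (Term.subst θ))
        ⊆ varsOf ((((B.take i).map Atom.outputs).flatten).map (Term.subst θ)) := by
      intro v hv
      rcases key hv with h | h
      · exact absurd (hHin h) (Set.notMem_empty v)
      · exact h
    rw [outputs_flatten]
    exact this
  · -- the atom comes from the original query
    push_neg at hcase
    set j := i - B.length with hj
    have hij : i = B.length + j := by omega
    have hjlen : j < rest.length := by
      rw [hlen] at hi
      omega
    have hget : ((B.map (Atom.subst θ)) ++ (rest.map (Atom.subst θ))).get ⟨i, hi⟩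
        = (rest.get ⟨j, hjlen⟩).subst θ := by
      simp only [List.get_eq_getElem]
      rw [List.getElem_append_right (by simpa using hcase)]
      simp [hj]
    have htake : ((B.map (Atom.subst θ)) ++ (rest.map (Atom.subst θ))).take i
        = B.map (Atom.subst θ) ++ (rest.take j).map (Atom.subst θ) := by
      rw [hij, ← List.length_map (as := B) (Atom.subst θ), List.take_length_add_append, List.map_take]
    -- well-modedness of the original query at position j+1
    have hq := hQ (j + 1) (by simpa using Nat.succ_lt_succ hjlen)
    have hqget : ((A :: rest).get ⟨j + 1, by simpa using Nat.succ_lt_succ hjlen⟩)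
        = rest.get ⟨j, hjlen⟩ := rfl
    have hqtake : (((A :: rest).take (j + 1)).map Atom.outputs).flatten
        = A.outputs ++ ((rest.take j).map Atom.outputs).flatten := by
      simp [List.take_succ_cons]
    rw [hqget, hqtake] at hq
    have key := varsOf_map_mono hq θ
    rw [List.map_append, varsOf_append] at key
    -- bound the A.outputs part using the clause head condition
    have keyH := varsOf_map_mono hh θ
    rw [List.map_append, varsOf_append] at keyH
    have hAout : varsOf (A.outputs.map (Term.subst θ))
        ⊆ varsOf (((B.map Atom.outputs).flatten).map (Term.subst θ)) := by
      rw [hout]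
      intro v hv
      rcases keyH hv with h | h
      · exact absurd (hHin h) (Set.notMem_empty v)
      · exact h
    rw [hget, htake]
    rw [List.map_append, List.flatten_append, varsOf_append, outputs_flatten,
      outputs_flatten]
    intro v hv
    rcases key hv with h | h
    · exact Or.inl (hAout h)
    · exact Or.inr h

theorem wm_step {Prog : Set (Clause P F V)}
    (hProg : ∀ c ∈ Prog, WellModedClause c.head c.body)
    {Q Q' : List (Atom P F V)} (hQ : WellModedQuery Q) (hstep : LDStep Prog Q Q') :
    WellModedQuery Q' := by
  obtain ⟨A, rest, c, ρ, θ, rfl, hc, -, -, hmgu, rfl⟩ := hstep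
  set c' := c.subst (fun v => Term.var (ρ v)) with hc'
  have hwmc : WellModedClause c'.head c'.body := wmClause_subst (hProg c hc) _
  have hunif : A.subst θ = c'.head.subst θ := hmgu.1
  have hinputs_eq : A.inputs.map (Term.subst θ) = c'.head.inputs.map (Term.subst θ) :=
    congrArg Atom.inputs hunif
  have houtputs_eq : A.outputs.map (Term.subst θ) = c'.head.outputs.map (Term.subst θ) :=
    congrArg Atom.outputs hunif
  have hground : varsOf (c'.head.inputs.map (Term.subst θ)) ⊆ (∅ : Set V) := by
    rw [← hinputs_eq, varsOf_map_subst]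
    rintro v ⟨w, hw, -⟩
    exact absurd (wm_first_ground hQ hw) (Set.notMem_empty w)
  exact resolvent_wm hQ hwmc hground houtputs_eq

theorem wm_reach {Prog : Set (Clause P F V)}
    (hProg : ∀ c ∈ Prog, WellModedClause c.head c.body)
    {Q₀ Q : List (Atom P F V)} (hQ₀ : WellModedQuery Q₀)
    (hreach : Relation.ReflTransGen (LDStep Prog) Q₀ Q) : WellModedQuery Q := by
  induction hreach with
  | refl => exact hQ₀
  | tail _ hstep ih => exact wm_step hProg ih hstep

end AuxProof

/-- Let `Prog` be a well-moded program and `Q₀` a well-moded query, and let `ξ`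
be an LD-derivation of `Q₀` in `Prog`. Then every atom selected in `ξ` (i.e.,
the leftmost atom of any query reachable from `Q₀` by LD-resolution steps)
contains ground terms in all of its input positions. -/
theorem selected_atoms_have_ground_inputs
    {P F V : Type} (Prog : Set (Clause P F V))
    (hProg : ∀ c ∈ Prog, WellModedClause c.head c.body)
    (Q₀ : List (Atom P F V)) (hQ₀ : WellModedQuery Q₀)
    (Q : List (Atom P F V))
    (hreach : Relation.ReflTransGen (LDStep Prog) Q₀ Q)
    (A : Atom P F V) (rest : List (Atom P F V)) (hsel : Q = A :: rest) :
    ∀ t ∈ A.inputs, ∀ v : V, ¬ Term.VarIn v t := by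
  have hQ : WellModedQuery Q := wm_reach hProg hQ₀ hreach
  subst hsel
  intro t ht v hv
  exact absurd (wm_first_ground hQ ⟨t, ht, hv⟩) (Set.notMem_empty v)
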